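/- Composite hypothesis testing (meta-)converse for the MASC: Let (f₁,f₂,g) be an (M₁,M₂,ε) MASC for (X₁,X₂) with joint distribution P_{X₁X₂} on countable alphabets 𝒳₁ × 𝒳₂, and let Q⁽¹⁾, Q⁽²⁾, Q⁽³⁾ be measures on 𝒳₁×𝒳₂, each assigning finite mass to every singleton. Then (β₁*, β₂*, β₃*) ∈ β_{1−ε}(P_{X₁X₂}, {Q⁽¹⁾, Q⁽²⁾, Q⁽³⁾}), where β₁* := M₁ · Σ_{x₂∈𝒳₂} sup_{x̂₁∈𝒳₁} Q⁽¹⁾(x̂₁,x₂), β₂* := M₂ · Σ_{x₁∈𝒳₁} sup_{x̂₂∈𝒳₂} Q⁽²⁾(x₁,x̂₂), and β₃* := M₁·M₂ · sup_{(x̂₁,x̂₂)∈𝒳₁×𝒳₂} Q⁽³⁾(x̂₁,x̂₂); in particular, the deterministic test t(x₁,x₂) := 1{ g(f₁(x₁),f₂(x₂)) = (x₁,x₂) } witnesses this membership. -/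

import Mathlib

open scoped ENNReal

open Function in
private lemma tsum_ite_le_of_inj {β γ : Type*} (p : β → Prop) [DecidablePred p]
    (Q : β → ℝ≥0∞) (G : γ → ℝ≥0∞) (i : {x // p x} → γ) (hi : Injective i)
    (hQ : ∀ x : {x // p x}, Q x.1 ≤ G (i x)) :
    (∑' x, if p x then Q x else 0) ≤ ∑' c, G c := by
  have h1 : (∑' x : {x | p x}, Q x.1) = ∑' x, if p x then Q x else 0 := by
    rw [tsum_subtype {x | p x} Q]
    exact tsum_congr fun x => by simp [Set.indicator_apply, Set.mem_setOf_eq]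
  rw [← h1]
  exact Summable.tsum_le_tsum_of_inj i hi (fun c _ => zero_le) hQ ENNReal.summable
    ENNReal.summable

/-- **Composite hypothesis testing (meta-)converse for the MASC.**
Given an `(M₁,M₂,ε)` MASC `(f₁,f₂,g)` for `(X₁,X₂) ∼ P` and measures `Q⁽¹⁾,Q⁽²⁾,Q⁽³⁾`
on `𝒳₁ × 𝒳₂` with finite singleton masses, the deterministic test
`t(x₁,x₂) = 1{g(f₁(x₁),f₂(x₂)) = (x₁,x₂)}` witnesses
`(β₁*,β₂*,β₃*) ∈ β_{1−ε}(P, {Q⁽¹⁾,Q⁽²⁾,Q⁽³⁾})`, where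
`β₁* = M₁·Σ_{x₂} sup_{x̂₁} Q⁽¹⁾(x̂₁,x₂)`, `β₂* = M₂·Σ_{x₁} sup_{x̂₂} Q⁽²⁾(x₁,x̂₂)`,
`β₃* = M₁M₂·sup_{x̂₁,x̂₂} Q⁽³⁾(x̂₁,x̂₂)`. -/
theorem masc_ht_converse {𝒳₁ 𝒳₂ : Type*} [Countable 𝒳₁] [Countable 𝒳₂]
    [DecidableEq 𝒳₁] [DecidableEq 𝒳₂]
    (P : 𝒳₁ × 𝒳₂ → ℝ) (hP0 : ∀ x, 0 ≤ P x) (hPsum : ∑' x, P x = 1)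
    (M₁ M₂ : ℕ) (hM₁ : 0 < M₁) (hM₂ : 0 < M₂) (ε : ℝ)
    (f₁ : 𝒳₁ → Fin M₁) (f₂ : 𝒳₂ → Fin M₂) (g : Fin M₁ × Fin M₂ → 𝒳₁ × 𝒳₂)
    (hcode : (∑' x : 𝒳₁ × 𝒳₂, if g (f₁ x.1, f₂ x.2) = x then (0 : ℝ) else P x) ≤ ε)
    (Q1 Q2 Q3 : 𝒳₁ × 𝒳₂ → ℝ≥0∞)
    (hQ1 : ∀ x, Q1 x ≠ ⊤) (hQ2 : ∀ x, Q2 x ≠ ⊤) (hQ3 : ∀ x, Q3 x ≠ ⊤) :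
    (1 - ε ≤ ∑' x : 𝒳₁ × 𝒳₂, if g (f₁ x.1, f₂ x.2) = x then P x else 0) ∧
    ((∑' x : 𝒳₁ × 𝒳₂, if g (f₁ x.1, f₂ x.2) = x then Q1 x else 0)
        ≤ (M₁ : ℝ≥0∞) * ∑' x₂ : 𝒳₂, ⨆ x₁ : 𝒳₁, Q1 (x₁, x₂)) ∧
    ((∑' x : 𝒳₁ × 𝒳₂, if g (f₁ x.1, f₂ x.2) = x then Q2 x else 0)
        ≤ (M₂ : ℝ≥0∞) * ∑' x₁ : 𝒳₁, ⨆ x₂ : 𝒳₂, Q2 (x₁, x₂)) ∧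
    ((∑' x : 𝒳₁ × 𝒳₂, if g (f₁ x.1, f₂ x.2) = x then Q3 x else 0)
        ≤ (M₁ : ℝ≥0∞) * (M₂ : ℝ≥0∞) * ⨆ y : 𝒳₁ × 𝒳₂, Q3 y) := by
  set p : 𝒳₁ × 𝒳₂ → Prop := fun x => g (f₁ x.1, f₂ x.2) = x with hp
  -- injectivity facts
  have key : ∀ (x y : {x // p x}), f₁ x.1.1 = f₁ y.1.1 → f₂ x.1.2 = f₂ y.1.2 → x = y := by
    rintro ⟨x, hx⟩ ⟨y, hy⟩ h1 h2
    have : x = y := by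
      rw [← hx, ← hy, h1, h2]
    exact Subtype.ext this
  refine ⟨?_, ?_, ?_, ?_⟩
  · -- probability part
    have hPsummable : Summable P := by
      by_contra h
      rw [tsum_eq_zero_of_not_summable h] at hPsum
      norm_num at hPsum
    have hin : Summable (fun x => if p x then P x else 0) :=
      hPsummable.of_nonneg_of_le (fun x => by split <;> simp [hP0])
        (fun x => by split <;> simp [hP0])
    have hout : Summable (fun x => if p x then (0:ℝ) else P x) :=
      hPsummable.of_nonneg_of_le (fun x => by split <;> simp [hP0])
        (fun x => by split <;> simp [hP0])
    have hsplit : (∑' x, if p x then P x else 0) + (∑' x, if p x then (0:ℝ) else P x) = 1 := by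
      rw [← Summable.tsum_add hin hout, ← hPsum]
      exact tsum_congr fun x => by split <;> ring
    linarith [hcode]
  · refine le_trans (tsum_ite_le_of_inj p Q1
      (fun c : Fin M₁ × 𝒳₂ => ⨆ x₁ : 𝒳₁, Q1 (x₁, c.2))
      (fun x => (f₁ x.1.1, x.1.2)) ?_ ?_) ?_
    · rintro ⟨x, hx⟩ ⟨y, hy⟩ h
      simp only [Prod.mk.injEq] at h
      exact key _ _ h.1 (by rw [h.2])
    · rintro ⟨x, hx⟩
      exact le_iSup (fun x₁ => Q1 (x₁, x.2)) x.1
    · beta_reduce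
      rw [ENNReal.tsum_prod']
      simp [tsum_fintype, ENNReal.tsum_mul_left, Finset.sum_const, mul_comm]
  · refine le_trans (tsum_ite_le_of_inj p Q2
      (fun c : 𝒳₁ × Fin M₂ => ⨆ x₂ : 𝒳₂, Q2 (c.1, x₂))
      (fun x => (x.1.1, f₂ x.1.2)) ?_ ?_) ?_
    · rintro ⟨x, hx⟩ ⟨y, hy⟩ h
      simp only [Prod.mk.injEq] at h
      exact key _ _ (by rw [h.1]) h.2
    · rintro ⟨x, hx⟩
      exact le_iSup (fun x₂ => Q2 (x.1, x₂)) x.2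
    · beta_reduce
      rw [ENNReal.tsum_prod']
      simp [tsum_fintype, ENNReal.tsum_mul_left, Finset.sum_const, mul_comm]
  · refine le_trans (tsum_ite_le_of_inj p Q3
      (fun _ : Fin M₁ × Fin M₂ => ⨆ y : 𝒳₁ × 𝒳₂, Q3 y)
      (fun x => (f₁ x.1.1, f₂ x.1.2)) ?_ ?_) ?_
    · rintro ⟨x, hx⟩ ⟨y, hy⟩ h
      simp only [Prod.mk.injEq] at h
      exact key _ _ h.1 h.2
    · rintro ⟨x, hx⟩
      exact le_iSup Q3 x
    · beta_reduce
      rw [ENNReal.tsum_prod']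
      simp only [tsum_fintype, Finset.sum_const, Finset.card_univ, Fintype.card_fin,
        nsmul_eq_mul]
      exact le_of_eq (by ring)
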